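/- Let 1 < p < 2, let L be a real n×m₁ matrix, N a real m₂×d matrix, A a real n×d matrix, k ≥ 1 an integer, T₁ a real t₁×n matrix, T₂ a real d×t₂ matrix, and c₁, c₁' ≥ 0, c₂, c₂' > 0, c ≥ 1 real numbers. Let X* be an m₁×m₂ matrix of rank at most k with ‖LX*N − A‖_p^p ≤ ‖LXN − A‖_p^p for all rank ≤ k matrices X, and let X̃ be an m₁×m₂ matrix of rank at most k with ‖T₁(LX̃N − A)‖_p^p ≤ ‖T₁(LXN − A)‖_p^p for all rank ≤ k matrices X. Suppose: (a) ‖T₁(LX*N − A)‖_p^p ≤ c₁ · ‖LX*N − A‖_p^p; (b) ‖T₁Lx‖_p^p ≥ (1/c₂) · ‖Lx‖_p^p for all x ∈ ℝ^{m₁}; (c) ‖(T₁(LX̃N − A))T₂‖_p^p ≤ c₁' · ‖T₁(LX̃N − A)‖_p^p; (d) ‖T₂ᵀNᵀx‖_p^p ≥ (1/c₂') · ‖Nᵀx‖_p^p for all x ∈ ℝ^{m₂}. Then any m₁×m₂ matrix X̂ of rank at most k satisfying ‖T₁(LX̂N − A)T₂‖_p^p ≤ c · ‖T₁(LXN − A)T₂‖_p^p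 for all rank ≤ k matrices X also satisfies ‖LX̂N − A‖_p^p ≤ c · 2^{2p−2}·(2c₁c₂ + 1)(2c₁'c₂' + 1) · ‖LX*N − A‖_p^p. -/

import Mathlib

open Matrix

/-- The `p`-th power of the entrywise `ℓ_p` norm of a matrix: `∑ i j, |M i j| ^ p`. -/
noncomputable def lppM {n d : ℕ} (p : ℝ) (M : Matrix (Fin n) (Fin d) ℝ) : ℝ :=
  ∑ i, ∑ j, |M i j| ^ p

/-- The `p`-th power of the `ℓ_p` norm of a vector: `∑ i, |v i| ^ p`. -/
noncomputable def lppV {n : ℕ} (p : ℝ) (v : Fin n → ℝ) : ℝ :=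
  ∑ i, |v i| ^ p

namespace LpSketchAux

lemma lppM_nonneg {n d : ℕ} {p : ℝ} (M : Matrix (Fin n) (Fin d) ℝ) : 0 ≤ lppM p M :=
  Finset.sum_nonneg fun _ _ => Finset.sum_nonneg fun _ _ => Real.rpow_nonneg (abs_nonneg _) _

lemma lppM_rows {n d : ℕ} {p : ℝ} (M : Matrix (Fin n) (Fin d) ℝ) :
    lppM p M = ∑ i, lppV p (M i) := rfl

lemma lppM_cols {n d : ℕ} {p : ℝ} (M : Matrix (Fin n) (Fin d) ℝ) :
    lppM p M = ∑ j, lppV p (fun i => M i j) := by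
  unfold lppM lppV; exact Finset.sum_comm

lemma col_mul {u v w : ℕ} (B : Matrix (Fin u) (Fin v) ℝ) (C : Matrix (Fin v) (Fin w) ℝ)
    (j : Fin w) : (fun i => (B * C) i j) = B.mulVec (fun k => C k j) := by
  funext i; simp [Matrix.mul_apply, Matrix.mulVec, dotProduct]

lemma row_mul {u v w : ℕ} (B : Matrix (Fin u) (Fin v) ℝ) (C : Matrix (Fin v) (Fin w) ℝ)
    (i : Fin u) : (B * C) i = Cᵀ.mulVec (B i) := by
  funext j; simp [Matrix.mul_apply, Matrix.mulVec, dotProduct, mul_comm]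

lemma G_add_le {a b : ℕ} {p : ℝ} (hp : 1 ≤ p) (M₁ M₂ : Matrix (Fin a) (Fin b) ℝ) :
    (lppM p (M₁ + M₂)) ^ (1/p) ≤ (lppM p M₁) ^ (1/p) + (lppM p M₂) ^ (1/p) := by
  have h := Real.Lp_add_le (Finset.univ : Finset (Fin a × Fin b))
    (fun x => M₁ x.1 x.2) (fun x => M₂ x.1 x.2) hp
  simpa [lppM, Fintype.sum_prod_type, Matrix.add_apply] using h

lemma lppM_neg {a b : ℕ} {p : ℝ} (M : Matrix (Fin a) (Fin b) ℝ) :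
    lppM p (-M) = lppM p M := by
  simp [lppM]

lemma G_sub_le {a b : ℕ} {p : ℝ} (hp : 1 ≤ p) (M₁ M₂ : Matrix (Fin a) (Fin b) ℝ) :
    (lppM p (M₁ - M₂)) ^ (1/p) ≤ (lppM p M₁) ^ (1/p) + (lppM p M₂) ^ (1/p) := by
  have h := G_add_le hp M₁ (-M₂)
  rw [lppM_neg] at h
  simpa [sub_eq_add_neg] using h

lemma G_scale {a b a' b' : ℕ} {p : ℝ} (hp : 0 < p) {M₁ : Matrix (Fin a) (Fin b) ℝ}
    {M₂ : Matrix (Fin a') (Fin b') ℝ} {t : ℝ} (ht : 0 ≤ t)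
    (h : lppM p M₁ ≤ t * lppM p M₂) :
    (lppM p M₁) ^ (1/p) ≤ t ^ (1/p) * (lppM p M₂) ^ (1/p) := by
  rw [← Real.mul_rpow ht (lppM_nonneg _)]
  exact Real.rpow_le_rpow (lppM_nonneg _) h (by positivity)

lemma two_term {p : ℝ} (hp : 1 ≤ p) (x y : ℝ) (hx : 0 ≤ x) (hy : 0 ≤ y) :
    (x + y) ^ p ≤ 2 ^ (p - 1) * (x ^ p + y ^ p) := by
  lift x to NNReal using hx
  lift y to NNReal using hy
  exact_mod_cast NNReal.rpow_add_le_mul_rpow_add_rpow x y hp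

end LpSketchAux

set_option maxHeartbeats 1000000 in
open LpSketchAux in
/-- `ℓ_p` version of the two-sided sketching lemma: if `T₁` has at most `c₁`-dilation on
`LX*N − A` and at most `c₂`-contraction on `L`, and `T₂ᵀ` has at most `c₁'`-dilation on
`(T₁(LX̃N − A))ᵀ` and at most `c₂'`-contraction on `Nᵀ` (all in `‖·‖_p^p`), then any rank-`k`
`c`-approximate minimizer `X̂` of the doubly sketched problem satisfies
`‖LX̂N − A‖_p^p ≤ c·2^{2p−2}(2c₁c₂ + 1)(2c₁'c₂' + 1)·‖LX*N − A‖_p^p`. -/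
theorem lp_two_sided_sketch_cost_preserving {n d m₁ m₂ t₁ t₂ k : ℕ} (hk : 1 ≤ k)
    (p : ℝ) (hp1 : 1 < p) (hp2 : p < 2)
    (L : Matrix (Fin n) (Fin m₁) ℝ) (N : Matrix (Fin m₂) (Fin d) ℝ)
    (A : Matrix (Fin n) (Fin d) ℝ)
    (T₁ : Matrix (Fin t₁) (Fin n) ℝ) (T₂ : Matrix (Fin d) (Fin t₂) ℝ)
    (c₁ c₁' c₂ c₂' c : ℝ)
    (hc₁ : 0 ≤ c₁) (hc₁' : 0 ≤ c₁') (hc₂ : 0 < c₂) (hc₂' : 0 < c₂') (hc : 1 ≤ c)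
    (Xstar : Matrix (Fin m₁) (Fin m₂) ℝ) (hXstar_rank : Xstar.rank ≤ k)
    (hXstar : ∀ X : Matrix (Fin m₁) (Fin m₂) ℝ, X.rank ≤ k →
      lppM p (L * Xstar * N - A) ≤ lppM p (L * X * N - A))
    (Xtil : Matrix (Fin m₁) (Fin m₂) ℝ) (hXtil_rank : Xtil.rank ≤ k)
    (hXtil : ∀ X : Matrix (Fin m₁) (Fin m₂) ℝ, X.rank ≤ k →
      lppM p (T₁ * (L * Xtil * N - A)) ≤ lppM p (T₁ * (L * X * N - A)))
    (ha : lppM p (T₁ * (L * Xstar * N - A)) ≤ c₁ * lppM p (L * Xstar * N - A))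
    (hb : ∀ x : Fin m₁ → ℝ,
      (1 / c₂) * lppV p (L.mulVec x) ≤ lppV p (T₁.mulVec (L.mulVec x)))
    (hcc : lppM p ((T₁ * (L * Xtil * N - A)) * T₂) ≤ c₁' * lppM p (T₁ * (L * Xtil * N - A)))
    (hdd : ∀ x : Fin m₂ → ℝ,
      (1 / c₂') * lppV p (Nᵀ.mulVec x) ≤ lppV p (T₂ᵀ.mulVec (Nᵀ.mulVec x)))
    (Xhat : Matrix (Fin m₁) (Fin m₂) ℝ) (hXhat_rank : Xhat.rank ≤ k)
    (hXhat : ∀ X : Matrix (Fin m₁) (Fin m₂) ℝ, X.rank ≤ k →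
      lppM p (T₁ * (L * Xhat * N - A) * T₂) ≤ c * lppM p (T₁ * (L * X * N - A) * T₂)) :
    lppM p (L * Xhat * N - A) ≤
      c * (2 : ℝ) ^ (2 * p - 2) * (2 * c₁ * c₂ + 1) * (2 * c₁' * c₂' + 1) *
        lppM p (L * Xstar * N - A) := by
  have hp1' : (1:ℝ) ≤ p := hp1.le
  have hp0 : (0:ℝ) < p := by linarith
  have hpne : p ≠ 0 := ne_of_gt hp0
  have hc0 : (0:ℝ) ≤ c := by linarith
  -- contraction step for `T₁` (columnwise)
  have S1 : ∀ Y : Matrix (Fin m₁) (Fin d) ℝ,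
      lppM p (L * Y) ≤ c₂ * lppM p (T₁ * (L * Y)) := by
    intro Y
    rw [lppM_cols, lppM_cols (M := T₁ * (L * Y)), Finset.mul_sum]
    refine Finset.sum_le_sum fun j _ => ?_
    have h1 : (fun i => (L * Y) i j) = L.mulVec (fun k => Y k j) := col_mul L Y j
    have h2 : (fun i => (T₁ * (L * Y)) i j) = T₁.mulVec (L.mulVec (fun k => Y k j)) := by
      rw [col_mul T₁ (L * Y) j, h1]
    rw [h1, h2]
    have h3 := hb (fun k => Y k j)
    rw [one_div] at h3
    calc lppV p (L.mulVec fun k => Y k j)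
        = c₂ * (c₂⁻¹ * lppV p (L.mulVec fun k => Y k j)) := by field_simp
      _ ≤ c₂ * lppV p (T₁.mulVec (L.mulVec fun k => Y k j)) :=
          mul_le_mul_of_nonneg_left h3 hc₂.le
  -- contraction step for `T₂` (rowwise)
  have S2 : ∀ Z : Matrix (Fin t₁) (Fin m₂) ℝ,
      lppM p (Z * N) ≤ c₂' * lppM p (Z * N * T₂) := by
    intro Z
    rw [lppM_rows, lppM_rows (M := Z * N * T₂), Finset.mul_sum]
    refine Finset.sum_le_sum fun i _ => ?_
    have h1 : (Z * N) i = Nᵀ.mulVec (Z i) := row_mul Z N i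
    have h2 : (Z * N * T₂) i = T₂ᵀ.mulVec (Nᵀ.mulVec (Z i)) := by
      rw [row_mul (Z * N) T₂ i, h1]
    rw [h1, h2]
    have h3 := hdd (Z i)
    rw [one_div] at h3
    calc lppV p (Nᵀ.mulVec (Z i))
        = c₂' * (c₂'⁻¹ * lppV p (Nᵀ.mulVec (Z i))) := by field_simp
      _ ≤ c₂' * lppV p (T₂ᵀ.mulVec (Nᵀ.mulVec (Z i))) :=
          mul_le_mul_of_nonneg_left h3 hc₂'.le
  -- matrix identities
  have id1 : L * Xhat * N - A = L * ((Xhat - Xstar) * N) + (L * Xstar * N - A) := by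
    simp only [Matrix.mul_sub, Matrix.sub_mul, Matrix.mul_assoc]; abel
  have id1' : T₁ * (L * ((Xhat - Xstar) * N))
      = T₁ * (L * Xhat * N - A) - T₁ * (L * Xstar * N - A) := by
    simp only [Matrix.mul_sub, Matrix.sub_mul, Matrix.mul_assoc]; abel
  have id2 : T₁ * (L * Xhat * N - A)
      = T₁ * (L * (Xhat - Xtil)) * N + T₁ * (L * Xtil * N - A) := by
    simp only [Matrix.mul_sub, Matrix.sub_mul, Matrix.mul_assoc]; abel
  have id3 : T₁ * (L * (Xhat - Xtil)) * N * T₂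
      = T₁ * (L * Xhat * N - A) * T₂ - T₁ * (L * Xtil * N - A) * T₂ := by
    simp only [Matrix.mul_sub, Matrix.sub_mul, Matrix.mul_assoc]; abel
  -- nonnegativity facts
  have hS : 0 ≤ lppM p (L * Xstar * N - A) := lppM_nonneg _
  have hns0 : 0 ≤ (lppM p (L * Xstar * N - A)) ^ (1/p) := Real.rpow_nonneg hS _
  have hnt10 : 0 ≤ (lppM p (T₁ * (L * Xtil * N - A))) ^ (1/p) :=
    Real.rpow_nonneg (lppM_nonneg _) _
  have ha10 : (0:ℝ) ≤ c₁ ^ (1/p) := Real.rpow_nonneg hc₁ _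
  have ha20 : (0:ℝ) ≤ c₂ ^ (1/p) := Real.rpow_nonneg hc₂.le _
  have hb10 : (0:ℝ) ≤ c₁' ^ (1/p) := Real.rpow_nonneg hc₁' _
  have hb20 : (0:ℝ) ≤ c₂' ^ (1/p) := Real.rpow_nonneg hc₂'.le _
  have hg0 : (0:ℝ) ≤ c ^ (1/p) := Real.rpow_nonneg hc0 _
  -- level-two chain: bound for the sketched cost of Xhat
  have e1 : (lppM p (T₁ * (L * Xhat * N - A))) ^ (1/p)
      ≤ (lppM p (T₁ * (L * (Xhat - Xtil)) * N)) ^ (1/p)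
        + (lppM p (T₁ * (L * Xtil * N - A))) ^ (1/p) := by
    have h := G_add_le hp1' (T₁ * (L * (Xhat - Xtil)) * N) (T₁ * (L * Xtil * N - A))
    rw [← id2] at h
    exact h
  have e2 : (lppM p (T₁ * (L * (Xhat - Xtil)) * N)) ^ (1/p)
      ≤ c₂' ^ (1/p) * (lppM p (T₁ * (L * (Xhat - Xtil)) * N * T₂)) ^ (1/p) :=
    G_scale hp0 hc₂'.le (S2 (T₁ * (L * (Xhat - Xtil))))
  have e3 : (lppM p (T₁ * (L * (Xhat - Xtil)) * N * T₂)) ^ (1/p)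
      ≤ (lppM p (T₁ * (L * Xhat * N - A) * T₂)) ^ (1/p)
        + (lppM p (T₁ * (L * Xtil * N - A) * T₂)) ^ (1/p) := by
    have h := G_sub_le hp1' (T₁ * (L * Xhat * N - A) * T₂) (T₁ * (L * Xtil * N - A) * T₂)
    rw [← id3] at h
    exact h
  have e4 : (lppM p (T₁ * (L * Xhat * N - A) * T₂)) ^ (1/p)
      ≤ c ^ (1/p) * (lppM p (T₁ * (L * Xtil * N - A) * T₂)) ^ (1/p) :=
    G_scale hp0 hc0 (hXhat Xtil hXtil_rank)
  have e5 : (lppM p (T₁ * (L * Xtil * N - A) * T₂)) ^ (1/p)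
      ≤ c₁' ^ (1/p) * (lppM p (T₁ * (L * Xtil * N - A))) ^ (1/p) :=
    G_scale hp0 hc₁' hcc
  have e6 : (lppM p (T₁ * (L * Xhat * N - A) * T₂)) ^ (1/p)
        + (lppM p (T₁ * (L * Xtil * N - A) * T₂)) ^ (1/p)
      ≤ (c ^ (1/p) + 1) * (c₁' ^ (1/p) * (lppM p (T₁ * (L * Xtil * N - A))) ^ (1/p)) := by
    have h := mul_le_mul_of_nonneg_left e5 hg0
    have hr : (c ^ (1/p) + 1) * (c₁' ^ (1/p) * (lppM p (T₁ * (L * Xtil * N - A))) ^ (1/p))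
        = c ^ (1/p) * (c₁' ^ (1/p) * (lppM p (T₁ * (L * Xtil * N - A))) ^ (1/p))
          + c₁' ^ (1/p) * (lppM p (T₁ * (L * Xtil * N - A))) ^ (1/p) := by ring
    linarith [e4, e5, h]
  have hB : (lppM p (T₁ * (L * Xhat * N - A))) ^ (1/p)
      ≤ ((c ^ (1/p) + 1) * (c₁' ^ (1/p) * c₂' ^ (1/p)) + 1)
        * (lppM p (T₁ * (L * Xtil * N - A))) ^ (1/p) := by
    have h7 := e3.trans e6
    have h8 := e2.trans (mul_le_mul_of_nonneg_left h7 hb20)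
    have h9 := e1.trans (add_le_add h8 (le_refl _))
    have hr : ((c ^ (1/p) + 1) * (c₁' ^ (1/p) * c₂' ^ (1/p)) + 1)
          * (lppM p (T₁ * (L * Xtil * N - A))) ^ (1/p)
        = c₂' ^ (1/p) * ((c ^ (1/p) + 1)
            * (c₁' ^ (1/p) * (lppM p (T₁ * (L * Xtil * N - A))) ^ (1/p)))
          + (lppM p (T₁ * (L * Xtil * N - A))) ^ (1/p) := by ring
    linarith [h9]
  -- comparison of sketched optimum with Xstar
  have hA : lppM p (T₁ * (L * Xtil * N - A)) ≤ c₁ * lppM p (L * Xstar * N - A) :=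
    (hXtil Xstar hXstar_rank).trans ha
  have f5 : (lppM p (T₁ * (L * Xtil * N - A))) ^ (1/p)
      ≤ c₁ ^ (1/p) * (lppM p (L * Xstar * N - A)) ^ (1/p) := G_scale hp0 hc₁ hA
  have f4 : (lppM p (T₁ * (L * Xstar * N - A))) ^ (1/p)
      ≤ c₁ ^ (1/p) * (lppM p (L * Xstar * N - A)) ^ (1/p) := G_scale hp0 hc₁ ha
  -- level-one chain
  have f1 : (lppM p (L * Xhat * N - A)) ^ (1/p)
      ≤ (lppM p (L * ((Xhat - Xstar) * N))) ^ (1/p)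
        + (lppM p (L * Xstar * N - A)) ^ (1/p) := by
    have h := G_add_le hp1' (L * ((Xhat - Xstar) * N)) (L * Xstar * N - A)
    rw [← id1] at h
    exact h
  have f2 : (lppM p (L * ((Xhat - Xstar) * N))) ^ (1/p)
      ≤ c₂ ^ (1/p) * (lppM p (T₁ * (L * ((Xhat - Xstar) * N)))) ^ (1/p) :=
    G_scale hp0 hc₂.le (S1 ((Xhat - Xstar) * N))
  have f3 : (lppM p (T₁ * (L * ((Xhat - Xstar) * N)))) ^ (1/p)
      ≤ (lppM p (T₁ * (L * Xhat * N - A))) ^ (1/p)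
        + (lppM p (T₁ * (L * Xstar * N - A))) ^ (1/p) := by
    have h := G_sub_le hp1' (T₁ * (L * Xhat * N - A)) (T₁ * (L * Xstar * N - A))
    rw [← id1'] at h
    exact h
  -- assemble the norm-level bound
  have hK0 : (0:ℝ) ≤ (c ^ (1/p) + 1) * (c₁' ^ (1/p) * c₂' ^ (1/p)) + 1 := by positivity
  have f6 : (lppM p (T₁ * (L * Xhat * N - A))) ^ (1/p)
      ≤ ((c ^ (1/p) + 1) * (c₁' ^ (1/p) * c₂' ^ (1/p)) + 1)
        * (c₁ ^ (1/p) * (lppM p (L * Xstar * N - A)) ^ (1/p)) :=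
    hB.trans (mul_le_mul_of_nonneg_left f5 hK0)
  have f7 := f3.trans (add_le_add f6 f4)
  have f8 := f2.trans (mul_le_mul_of_nonneg_left f7 ha20)
  have f9 := f1.trans (add_le_add f8 (le_refl _))
  have hsum : (lppM p (L * Xhat * N - A)) ^ (1/p)
      ≤ ((c ^ (1/p) + 1) * (c₁ ^ (1/p) * (c₂ ^ (1/p) * (c₁' ^ (1/p) * (c₂' ^ (1/p)
          * (lppM p (L * Xstar * N - A)) ^ (1/p)))))
          + (lppM p (L * Xstar * N - A)) ^ (1/p))
        + 2 * (c₁ ^ (1/p) * (c₂ ^ (1/p) * (lppM p (L * Xstar * N - A)) ^ (1/p))) := by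
    have hr : c₂ ^ (1/p) * (((c ^ (1/p) + 1) * (c₁' ^ (1/p) * c₂' ^ (1/p)) + 1)
            * (c₁ ^ (1/p) * (lppM p (L * Xstar * N - A)) ^ (1/p))
          + c₁ ^ (1/p) * (lppM p (L * Xstar * N - A)) ^ (1/p))
          + (lppM p (L * Xstar * N - A)) ^ (1/p)
        = ((c ^ (1/p) + 1) * (c₁ ^ (1/p) * (c₂ ^ (1/p) * (c₁' ^ (1/p) * (c₂' ^ (1/p)
            * (lppM p (L * Xstar * N - A)) ^ (1/p)))))
            + (lppM p (L * Xstar * N - A)) ^ (1/p))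
          + 2 * (c₁ ^ (1/p) * (c₂ ^ (1/p) * (lppM p (L * Xstar * N - A)) ^ (1/p))) := by ring
    linarith [f9]
  -- pass to p-th powers
  have hpow : ∀ x : ℝ, 0 ≤ x → (x ^ (1/p)) ^ p = x := by
    intro x hx
    rw [← Real.rpow_mul hx, one_div_mul_cancel hpne, Real.rpow_one]
  have hmul : ∀ x y : ℝ, 0 ≤ x → 0 ≤ y → (x * y) ^ p = x ^ p * y ^ p := fun x y hx hy =>
    Real.mul_rpow hx hy
  set U : ℝ := (c ^ (1/p) + 1) * (c₁ ^ (1/p) * (c₂ ^ (1/p) * (c₁' ^ (1/p) * (c₂' ^ (1/p)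
      * (lppM p (L * Xstar * N - A)) ^ (1/p))))) with hU
  set W : ℝ := (lppM p (L * Xstar * N - A)) ^ (1/p) with hW
  set V : ℝ := 2 * (c₁ ^ (1/p) * (c₂ ^ (1/p) * (lppM p (L * Xstar * N - A)) ^ (1/p))) with hV
  have hU0 : 0 ≤ U := by rw [hU]; positivity
  have hW0 : 0 ≤ W := hns0
  have hV0 : 0 ≤ V := by rw [hV]; positivity
  have h1 : lppM p (L * Xhat * N - A) ≤ ((U + W) + V) ^ p := by
    have heq : lppM p (L * Xhat * N - A)
        = ((lppM p (L * Xhat * N - A)) ^ (1/p)) ^ p := (hpow _ (lppM_nonneg _)).symm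
    rw [heq]
    exact Real.rpow_le_rpow (Real.rpow_nonneg (lppM_nonneg _) _) hsum hp0.le
  have h2 : ((U + W) + V) ^ p ≤ 2 ^ (p-1) * ((U + W) ^ p + V ^ p) :=
    two_term hp1' _ _ (by positivity) hV0
  have h3 : (U + W) ^ p ≤ 2 ^ (p-1) * (U ^ p + W ^ p) := two_term hp1' _ _ hU0 hW0
  -- compute the p-th powers of U, V, W
  have hWp : W ^ p = lppM p (L * Xstar * N - A) := hpow _ hS
  have hVp : V ^ p = 2 ^ p * (c₁ * (c₂ * lppM p (L * Xstar * N - A))) := by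
    rw [hV, hmul _ _ (by norm_num) (by positivity), hmul _ _ ha10 (by positivity),
      hmul _ _ ha20 hns0, hpow _ hc₁, hpow _ hc₂.le, hpow _ hS]
  have hUp : U ^ p = (c ^ (1/p) + 1) ^ p
      * (c₁ * (c₂ * (c₁' * (c₂' * lppM p (L * Xstar * N - A))))) := by
    rw [hU, hmul _ _ (by positivity) (by positivity), hmul _ _ ha10 (by positivity),
      hmul _ _ ha20 (by positivity), hmul _ _ hb10 (by positivity), hmul _ _ hb20 hns0,
      hpow _ hc₁, hpow _ hc₂.le, hpow _ hc₁', hpow _ hc₂'.le, hpow _ hS]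
  have hg1 : (1:ℝ) ≤ c ^ (1/p) := by
    calc (1:ℝ) = 1 ^ (1/p) := (Real.one_rpow _).symm
      _ ≤ c ^ (1/p) := Real.rpow_le_rpow (by norm_num) hc (by positivity)
  have hgp : (c ^ (1/p) + 1) ^ p ≤ 2 ^ p * c := by
    calc (c ^ (1/p) + 1) ^ p ≤ (2 * c ^ (1/p)) ^ p :=
          Real.rpow_le_rpow (by positivity) (by linarith) hp0.le
      _ = 2 ^ p * (c ^ (1/p)) ^ p := hmul _ _ (by norm_num) hg0
      _ = 2 ^ p * c := by rw [hpow _ hc0]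
  have hUple : U ^ p ≤ (2 ^ p * c)
      * (c₁ * (c₂ * (c₁' * (c₂' * lppM p (L * Xstar * N - A))))) := by
    rw [hUp]
    exact mul_le_mul_of_nonneg_right hgp (by positivity)
  -- exponent arithmetic
  have two_pos : (0:ℝ) < 2 := by norm_num
  have hq0 : (0:ℝ) ≤ (2:ℝ) ^ (p-1) := Real.rpow_nonneg (by norm_num) _
  have hq2 : (2:ℝ) ^ (p-1) ≤ 2 := by
    calc (2:ℝ) ^ (p-1) ≤ 2 ^ (1:ℝ) :=
          Real.rpow_le_rpow_of_exponent_le (by norm_num) (by linarith)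
      _ = 2 := Real.rpow_one 2
  have h2p : (2:ℝ) ^ p = 2 ^ (p-1) * 2 := by
    rw [show (2:ℝ) ^ p = 2 ^ ((p-1) + 1) by congr 1; ring, Real.rpow_add two_pos,
      Real.rpow_one]
  have h22 : (2:ℝ) ^ (2*p - 2) = 2 ^ (p-1) * 2 ^ (p-1) := by
    rw [← Real.rpow_add two_pos]
    congr 1; ring
  -- final arithmetic assembly
  have h4 : lppM p (L * Xhat * N - A)
      ≤ 2 ^ (p-1) * (2 ^ (p-1) * (U ^ p + W ^ p) + V ^ p) := by
    have := mul_le_mul_of_nonneg_left (add_le_add_right h3 (V ^ p)) hq0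
    linarith [h1.trans h2]
  have h5 : 2 ^ (p-1) * (2 ^ (p-1) * (U ^ p + W ^ p) + V ^ p)
      ≤ 2 ^ (p-1) * (2 ^ (p-1) * ((2 ^ p * c)
          * (c₁ * (c₂ * (c₁' * (c₂' * lppM p (L * Xstar * N - A))))) + W ^ p) + V ^ p) := by
    have := mul_le_mul_of_nonneg_left (add_le_add_right hUple (W ^ p)) hq0
    have := mul_le_mul_of_nonneg_left (add_le_add_right this (V ^ p)) hq0
    linarith
  have key : 2 ^ (p-1) * (2 ^ (p-1) * ((2 ^ p * c)
        * (c₁ * (c₂ * (c₁' * (c₂' * lppM p (L * Xstar * N - A))))) + W ^ p) + V ^ p)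
      ≤ c * (2 : ℝ) ^ (2 * p - 2) * (2 * c₁ * c₂ + 1) * (2 * c₁' * c₂' + 1) *
        lppM p (L * Xstar * N - A) := by
    rw [hWp, hVp, h2p, h22]
    set q : ℝ := (2:ℝ) ^ (p-1) with hqdef
    have hq1 : (0:ℝ) ≤ q := hq0
    have expand : c * (q * q) * (2 * c₁ * c₂ + 1) * (2 * c₁' * c₂' + 1) *
          lppM p (L * Xstar * N - A)
        - (q * (q * ((q * 2 * c) * (c₁ * (c₂ * (c₁' * (c₂' * lppM p (L * Xstar * N - A)))))
            + lppM p (L * Xstar * N - A))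
          + (q * 2) * (c₁ * (c₂ * lppM p (L * Xstar * N - A)))))
        = q * q * lppM p (L * Xstar * N - A) * (c * c₁ * c₂ * c₁' * c₂') * (4 - 2*q)
          + 2 * (q * q) * (c₁ * c₂) * lppM p (L * Xstar * N - A) * (c - 1)
          + q * q * lppM p (L * Xstar * N - A) * (c - 1)
          + 2 * c * (q * q) * (c₁' * c₂') * lppM p (L * Xstar * N - A) := by ring
    have t1 : 0 ≤ q * q * lppM p (L * Xstar * N - A) * (c * c₁ * c₂ * c₁' * c₂') * (4 - 2*q) := by
      have : (0:ℝ) ≤ 4 - 2*q := by linarith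
      positivity
    have t2 : 0 ≤ 2 * (q * q) * (c₁ * c₂) * lppM p (L * Xstar * N - A) * (c - 1) := by
      have : (0:ℝ) ≤ c - 1 := by linarith
      positivity
    have t3 : 0 ≤ q * q * lppM p (L * Xstar * N - A) * (c - 1) := by
      have : (0:ℝ) ≤ c - 1 := by linarith
      positivity
    have t4 : 0 ≤ 2 * c * (q * q) * (c₁' * c₂') * lppM p (L * Xstar * N - A) := by positivity
    linarith [expand, t1, t2, t3, t4]
  linarith [h4, h5, key]
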